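/- arXiv:1205.7089 — 3 statements merged into one kernel-verified Lean document; each statement's English description precedes it below -/
import Mathlib

section
/- With Cℓ and W as in the Ramond Clifford algebra setup, the Sugawara operators L^{Cℓ}_n = −(1/8) Σ_{r≥0} Σ_i (2r−n) e_{i,n−r} e_{i,r} + (1/8) Σ_{r<0} Σ_i (2r−n) e_{i,r} e_{i,n−r} + (d/16) δ_{n,0} satisfy [L^{Cℓ}_n, e_{i,m}] = −(n/2 + m) e_{i,n+m} for all i, n, m. -/
/-- The Sugawara operator
`L^{Cℓ}_n = −(1/8) Σ_{r≥0} Σ_i (2r−n) e_{i,n−r} e_{i,r}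
          + (1/8) Σ_{r<0} Σ_i (2r−n) e_{i,r} e_{i,n−r} + (d/16) δ_{n,0}`
on a module `W` over the Ramond Clifford algebra; the sum over `r ∈ ℤ` is a
`finsum`, well defined under the truncation hypothesis. -/
noncomputable def sugawaraOp {d : ℕ} {W : Type*} [AddCommGroup W] [Module ℂ W]
    (e : Fin d → ℤ → W →ₗ[ℂ] W) (n : ℤ) (w : W) : W :=
  (∑ᶠ r : ℤ,
      if 0 ≤ r then
        (-(8 : ℂ)⁻¹ * ((2 * r - n : ℤ) : ℂ)) • ∑ i : Fin d, e i (n - r) (e i r w)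
      else
        ((8 : ℂ)⁻¹ * ((2 * r - n : ℤ) : ℂ)) • ∑ i : Fin d, e i r (e i (n - r) w))
    + (if n = 0 then ((d : ℂ) / 16) • w else 0)

section Aux

variable {d : ℕ} {W : Type*} [AddCommGroup W] [Module ℂ W]

/-- The summand of the Sugawara operator. -/
noncomputable def sugaF (e : Fin d → ℤ → W →ₗ[ℂ] W) (n : ℤ) (w : W) : ℤ → W :=
  fun r =>
    if 0 ≤ r then
      (-(8 : ℂ)⁻¹ * ((2 * r - n : ℤ) : ℂ)) • ∑ i : Fin d, e i (n - r) (e i r w)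
    else
      ((8 : ℂ)⁻¹ * ((2 * r - n : ℤ) : ℂ)) • ∑ i : Fin d, e i r (e i (n - r) w)

theorem sugawaraOp_eq (e : Fin d → ℤ → W →ₗ[ℂ] W) (n : ℤ) (w : W) :
    sugawaraOp e n w = (∑ᶠ r : ℤ, sugaF e n w r)
      + (if n = 0 then ((d : ℂ) / 16) • w else 0) := rfl

theorem sugaF_support (e : Fin d → ℤ → W →ₗ[ℂ] W)
    (htrunc : ∀ w : W, ∃ N : ℤ, ∀ (i : Fin d) (n : ℤ), N < n → e i n w = 0)
    (n : ℤ) (w : W) : (Function.support (sugaF e n w)).Finite := by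
  obtain ⟨N, hN⟩ := htrunc w
  apply Set.Finite.subset (Set.finite_Icc (min (n - N) 0) (max N 0))
  intro r hr
  simp only [Function.mem_support] at hr
  simp only [Set.mem_Icc]
  by_cases h0 : 0 ≤ r
  · refine ⟨le_trans (min_le_right _ _) h0, le_trans ?_ (le_max_left _ _)⟩
    by_contra h
    push_neg at h
    apply hr
    unfold sugaF
    rw [if_pos h0]
    have hz : ∀ j : Fin d, e j r w = 0 := fun j => hN j r h
    simp [hz]
  · push_neg at h0
    refine ⟨le_trans (min_le_left _ _) ?_, le_trans h0.le (le_max_right _ _)⟩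
    by_contra h
    push_neg at h
    apply hr
    unfold sugaF
    rw [if_neg (not_le.2 h0)]
    have hz : ∀ j : Fin d, e j (n - r) w = 0 := fun j => hN j (n - r) (by omega)
    simp [hz]

theorem sum_delta {M : Type*} [AddCommMonoid M] (i : Fin d) (P : Prop) [Decidable P]
    (f : Fin d → M) :
    (∑ j : Fin d, if j = i ∧ P then f j else 0) = if P then f i else 0 := by
  by_cases hP : P <;> simp [hP]

theorem sugaF_comm (e : Fin d → ℤ → W →ₗ[ℂ] W)
    (hrel : ∀ (i j : Fin d) (n m : ℤ) (w : W),
      e i n (e j m w) + e j m (e i n w) = if i = j ∧ n + m = 0 then (-2 : ℂ) • w else 0)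
    (i : Fin d) (n m r : ℤ) (w : W) :
    sugaF e n (e i m w) r - e i m (sugaF e n w r)
      = (if r = -m then (-(((n : ℂ) + 2 * m) / 4)) • e i (n + m) w else 0)
        + (if r = n + m then (-(((n : ℂ) + 2 * m) / 4)) • e i (n + m) w else 0) := by
  unfold sugaF
  by_cases hr : 0 ≤ r
  · rw [if_pos hr, if_pos hr, map_smul, map_sum, ← smul_sub, ← Finset.sum_sub_distrib]
    have hterm : ∀ j : Fin d,
        e j (n - r) (e j r (e i m w)) - e i m (e j (n - r) (e j r w))
          = (if j = i ∧ r + m = 0 then (-2 : ℂ) • e j (n - r) w else 0)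
            - (if j = i ∧ (n - r) + m = 0 then (-2 : ℂ) • e j r w else 0) := by
      intro j
      have h1 : e j r (e i m w)
          = (if j = i ∧ r + m = 0 then (-2 : ℂ) • w else 0) - e i m (e j r w) :=
        eq_sub_of_add_eq (hrel j i r m w)
      have h2 : e j (n - r) (e i m (e j r w))
          = (if j = i ∧ (n - r) + m = 0 then (-2 : ℂ) • (e j r w) else 0)
            - e i m (e j (n - r) (e j r w)) :=
        eq_sub_of_add_eq (hrel j i (n - r) m (e j r w))
      rw [h1, map_sub, h2, apply_ite (e j (n - r)), map_smul, map_zero]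
      abel
    rw [Finset.sum_congr rfl (fun j _ => hterm j), Finset.sum_sub_distrib,
      sum_delta, sum_delta]
    by_cases h1 : r = -m
    · by_cases h2 : r = n + m
      · rw [if_pos h1, if_pos h2,
          if_pos (show r + m = 0 by omega), if_pos (show (n - r) + m = 0 by omega),
          show n - r = n + m from by omega, show r = n + m from h2]
        have hn : (n : ℂ) + 2 * m = 0 := by
          have h : n + 2 * m = 0 := by omega
          have := congrArg (Int.cast : ℤ → ℂ) h
          push_cast at this
          linear_combination this
        rw [sub_self, smul_zero, ← add_smul]
        have hc : (-(((n : ℂ) + 2 * m) / 4)) + (-(((n : ℂ) + 2 * m) / 4)) = 0 := by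
          rw [hn]; ring
        rw [hc, zero_smul]
      · rw [if_pos h1, if_neg h2, add_zero,
          if_pos (show r + m = 0 by omega), if_neg (show ¬((n - r) + m = 0) by omega),
          sub_zero, show n - r = n + m from by omega, smul_smul]
        congr 1
        rw [show r = -m from h1]
        push_cast
        ring
    · by_cases h2 : r = n + m
      · rw [if_neg h1, if_pos h2, zero_add,
          if_neg (show ¬(r + m = 0) by omega), if_pos (show (n - r) + m = 0 by omega),
          zero_sub, show r = n + m from h2, smul_neg, ← neg_smul, smul_smul]
        congr 1
        push_cast
        ring
      · rw [if_neg h1, if_neg h2,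
          if_neg (show ¬(r + m = 0) by omega), if_neg (show ¬((n - r) + m = 0) by omega),
          sub_zero, smul_zero, add_zero]
  · rw [if_neg hr, if_neg hr, map_smul, map_sum, ← smul_sub, ← Finset.sum_sub_distrib]
    have hterm : ∀ j : Fin d,
        e j r (e j (n - r) (e i m w)) - e i m (e j r (e j (n - r) w))
          = (if j = i ∧ (n - r) + m = 0 then (-2 : ℂ) • e j r w else 0)
            - (if j = i ∧ r + m = 0 then (-2 : ℂ) • e j (n - r) w else 0) := by
      intro j
      have h1 : e j (n - r) (e i m w)
          = (if j = i ∧ (n - r) + m = 0 then (-2 : ℂ) • w else 0) - e i m (e j (n - r) w) :=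
        eq_sub_of_add_eq (hrel j i (n - r) m w)
      have h2 : e j r (e i m (e j (n - r) w))
          = (if j = i ∧ r + m = 0 then (-2 : ℂ) • (e j (n - r) w) else 0)
            - e i m (e j r (e j (n - r) w)) :=
        eq_sub_of_add_eq (hrel j i r m (e j (n - r) w))
      rw [h1, map_sub, h2, apply_ite (e j r), map_smul, map_zero]
      abel
    rw [Finset.sum_congr rfl (fun j _ => hterm j), Finset.sum_sub_distrib,
      sum_delta, sum_delta]
    by_cases h1 : r = -m
    · by_cases h2 : r = n + m
      · rw [if_pos h1, if_pos h2,
          if_pos (show r + m = 0 by omega), if_pos (show (n - r) + m = 0 by omega),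
          show n - r = n + m from by omega, show r = n + m from h2]
        have hn : (n : ℂ) + 2 * m = 0 := by
          have h : n + 2 * m = 0 := by omega
          have := congrArg (Int.cast : ℤ → ℂ) h
          push_cast at this
          linear_combination this
        rw [sub_self, smul_zero, ← add_smul]
        have hc : (-(((n : ℂ) + 2 * m) / 4)) + (-(((n : ℂ) + 2 * m) / 4)) = 0 := by
          rw [hn]; ring
        rw [hc, zero_smul]
      · rw [if_pos h1, if_neg h2, add_zero,
          if_neg (show ¬((n - r) + m = 0) by omega), if_pos (show r + m = 0 by omega),
          zero_sub, show n - r = n + m from by omega, smul_neg, ← neg_smul, smul_smul]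
        congr 1
        rw [show r = -m from h1]
        push_cast
        ring
    · by_cases h2 : r = n + m
      · rw [if_neg h1, if_pos h2, zero_add,
          if_pos (show (n - r) + m = 0 by omega), if_neg (show ¬(r + m = 0) by omega),
          sub_zero, show r = n + m from h2, smul_smul]
        congr 1
        push_cast
        ring
      · rw [if_neg h1, if_neg h2,
          if_neg (show ¬((n - r) + m = 0) by omega), if_neg (show ¬(r + m = 0) by omega),
          sub_zero, smul_zero, add_zero]

end Aux

/-- The Sugawara operators `L^{Cℓ}_n` on a locally-truncated module `W` over the
Ramond Clifford algebra satisfy `[L^{Cℓ}_n, e_{i,m}] = −(n/2 + m) e_{i,n+m}`. -/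
theorem stmt6 {d : ℕ} {W : Type*} [AddCommGroup W] [Module ℂ W]
    (e : Fin d → ℤ → W →ₗ[ℂ] W)
    (hrel : ∀ (i j : Fin d) (n m : ℤ) (w : W),
      e i n (e j m w) + e j m (e i n w) = if i = j ∧ n + m = 0 then (-2 : ℂ) • w else 0)
    (htrunc : ∀ w : W, ∃ N : ℤ, ∀ (i : Fin d) (n : ℤ), N < n → e i n w = 0) :
    ∀ (i : Fin d) (n m : ℤ) (w : W),
      sugawaraOp e n (e i m w) - e i m (sugawaraOp e n w)
        = (-((n : ℂ) / 2 + (m : ℂ))) • e i (n + m) w := by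
  intro i n m w
  have hF1 := sugaF_support e htrunc n (e i m w)
  have hF2 := sugaF_support e htrunc n w
  have hF2' : (Function.support fun r => e i m (sugaF e n w r)).Finite := by
    apply hF2.subset
    intro r hr
    simp only [Function.mem_support] at hr ⊢
    exact fun h => hr (by rw [h, map_zero])
  have hmap : e i m (∑ᶠ r : ℤ, sugaF e n w r) = ∑ᶠ r : ℤ, e i m (sugaF e n w r) :=
    (e i m).toAddMonoidHom.map_finsum hF2
  rw [sugawaraOp_eq, sugawaraOp_eq, map_add, hmap]
  have hC : (e i m) (if n = 0 then ((d : ℂ) / 16) • w else 0)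
      = (if n = 0 then ((d : ℂ) / 16) • (e i m w) else 0) := by
    split_ifs <;> simp
  rw [hC]
  have hrearrange : ∀ a b c : W, (a + c) - (b + c) = a - b := fun a b c => by abel
  rw [hrearrange]
  rw [← finsum_sub_distrib hF1 hF2']
  rw [finsum_congr (fun r => sugaF_comm e hrel i n m r w)]
  have hs1 : (Function.support fun r : ℤ =>
      (if r = -m then (-(((n : ℂ) + 2 * m) / 4)) • e i (n + m) w else 0)).Finite := by
    apply Set.Finite.subset (Set.finite_singleton (-m))
    intro r hr
    simp only [Function.mem_support] at hr
    by_contra h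
    exact hr (if_neg h)
  have hs2 : (Function.support fun r : ℤ =>
      (if r = n + m then (-(((n : ℂ) + 2 * m) / 4)) • e i (n + m) w else 0)).Finite := by
    apply Set.Finite.subset (Set.finite_singleton (n + m))
    intro r hr
    simp only [Function.mem_support] at hr
    by_contra h
    exact hr (if_neg h)
  rw [finsum_add_distrib hs1 hs2,
    finsum_eq_single _ (-m) (fun b hb => if_neg hb),
    finsum_eq_single _ (n + m) (fun b hb => if_neg hb),
    if_pos rfl, if_pos rfl, ← add_smul]
  congr 1
  ring
end

section
/- With Cℓ and W as above, the operators L^{Cℓ}_n define a Virasoro action of central charge d/2 on W, i.e. [L^{Cℓ}_n, L^{Cℓ}_m] = (n−m) L^{Cℓ}_{n+m} + (d/24)(n³−n) δ_{n+m,0}. -/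
open Function

namespace SugAux

variable {d : ℕ} {W : Type*} [AddCommGroup W] [Module ℂ W]

/-- The integrand of the Sugawara finsum. -/
noncomputable def trm (e : Fin d → ℤ → W →ₗ[ℂ] W) (n : ℤ) (w : W) (r : ℤ) : W :=
  if 0 ≤ r then
    (-(8 : ℂ)⁻¹ * ((2 * r - n : ℤ) : ℂ)) • ∑ i : Fin d, e i (n - r) (e i r w)
  else
    ((8 : ℂ)⁻¹ * ((2 * r - n : ℤ) : ℂ)) • ∑ i : Fin d, e i r (e i (n - r) w)

variable {e : Fin d → ℤ → W →ₗ[ℂ] W}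

lemma trm_eq_zero {n : ℤ} {w : W} {N : ℤ} (hN : ∀ (i : Fin d) (k : ℤ), N < k → e i k w = 0)
    {r : ℤ} (h : r ∉ Set.Icc (min (n - N) 0) (max N 0)) : trm e n w r = 0 := by
  rw [Set.mem_Icc, not_and_or, not_le, not_le] at h
  unfold trm
  split_ifs with h0
  · have hNr : N < r := by omega
    simp only [hN _ _ hNr, map_zero, Finset.sum_const_zero, smul_zero]
  · have hNr : N < n - r := by omega
    simp only [hN _ _ hNr, map_zero, Finset.sum_const_zero, smul_zero]

lemma trm_fin (ht : ∀ w : W, ∃ N : ℤ, ∀ (i : Fin d) (n : ℤ), N < n → e i n w = 0)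
    (n : ℤ) (w : W) : (support (trm e n w)).Finite := by
  obtain ⟨N, hN⟩ := ht w
  refine Set.Finite.subset (Set.finite_Icc (min (n - N) 0) (max N 0)) ?_
  intro r hr
  by_contra hmem
  exact hr (trm_eq_zero hN hmem)

lemma trm_add (n : ℤ) (u v : W) (r : ℤ) :
    trm e n (u + v) r = trm e n u r + trm e n v r := by
  unfold trm
  split_ifs <;> simp [map_add, Finset.sum_add_distrib, smul_add]

lemma trm_smul (n : ℤ) (c : ℂ) (u : W) (r : ℤ) :
    trm e n (c • u) r = c • trm e n u r := by
  unfold trm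
  split_ifs <;>
    simp [map_smul, Finset.smul_sum, smul_comm c]

/-- The pure-sum part of the Sugawara operator, as a linear map. -/
noncomputable def SL (e : Fin d → ℤ → W →ₗ[ℂ] W)
    (ht : ∀ w : W, ∃ N : ℤ, ∀ (i : Fin d) (n : ℤ), N < n → e i n w = 0) (n : ℤ) :
    W →ₗ[ℂ] W where
  toFun w := ∑ᶠ r, trm e n w r
  map_add' u v := by
    rw [← finsum_add_distrib (trm_fin ht n u) (trm_fin ht n v)]
    exact finsum_congr fun r => trm_add n u v r
  map_smul' c u := by
    simp only [RingHom.id_apply]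
    rw [show (∑ᶠ r, trm e n (c • u) r) = ∑ᶠ r, c • trm e n u r from
      finsum_congr fun r => trm_smul n c u r, ← smul_finsum' c (trm_fin ht n u)]

lemma SL_apply (ht : ∀ w : W, ∃ N : ℤ, ∀ (i : Fin d) (n : ℤ), N < n → e i n w = 0)
    (n : ℤ) (w : W) : SL e ht n w = ∑ᶠ r, trm e n w r := rfl

end SugAux
section Part2

open Function SugAux

variable {d : ℕ} {W : Type*} [AddCommGroup W] [Module ℂ W]
variable {e : Fin d → ℤ → W →ₗ[ℂ] W}
variable (hrel : ∀ (i j : Fin d) (n m : ℤ) (w : W),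
      e i n (e j m w) + e j m (e i n w) = if i = j ∧ n + m = 0 then (-2 : ℂ) • w else 0)
variable (ht : ∀ w : W, ∃ N : ℤ, ∀ (i : Fin d) (n : ℤ), N < n → e i n w = 0)

include hrel in
lemma swap_e (i j : Fin d) (a b : ℤ) (w : W) :
    e i a (e j b w) = (if i = j ∧ a + b = 0 then (-2 : ℂ) • w else 0) - e j b (e i a w) :=
  eq_sub_of_add_eq (hrel i j a b w)

include hrel in
lemma sum_swap_e (a b : ℤ) (w : W) :
    ∑ i : Fin d, e i a (e i b w)
      = (if a + b = 0 then (-2 * (d : ℂ)) • w else 0) - ∑ i : Fin d, e i b (e i a w) := by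
  rw [Finset.sum_congr rfl (fun i _ => swap_e hrel i i a b w), Finset.sum_sub_distrib]
  congr 1
  by_cases h : a + b = 0
  · simp only [h, and_true, if_true, Finset.sum_const, Finset.card_univ, Fintype.card_fin]
    rw [← Nat.cast_smul_eq_nsmul ℂ, smul_smul]
    congr 1
    ring
  · simp [h]

lemma sum_ite_pair {C : Prop} [Decidable C] (f : Fin d → W) (j : Fin d) :
    (∑ i : Fin d, if i = j ∧ C then f i else 0) = if C then f j else 0 := by
  by_cases hC : C
  · simp only [hC, and_true]
    exact (Finset.sum_ite_eq' Finset.univ j f).trans (if_pos (Finset.mem_univ j))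
  · simp [hC]

include hrel in
lemma move_thru (a b k : ℤ) (i j : Fin d) (w : W) :
    e i a (e i b (e j k w)) - e j k (e i a (e i b w))
      = (if i = j ∧ b + k = 0 then (-2 : ℂ) • e i a w else 0)
        - (if i = j ∧ a + k = 0 then (-2 : ℂ) • e i b w else 0) := by
  rw [swap_e hrel i j b k w, map_sub (e i a), swap_e hrel i j a k (e i b w)]
  by_cases hij : i = j
  · subst hij
    by_cases hbk : b + k = 0 <;> by_cases hak : a + k = 0 <;>
      simp only [hbk, hak, and_true, and_false, and_self, if_true, if_false, true_and,
        eq_self_iff_true, map_smul, map_zero] <;> abel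
  · simp only [hij, false_and, if_false, map_zero]
    abel

include hrel in
lemma comm_trm (n k : ℤ) (j : Fin d) (w : W) (r : ℤ) :
    trm e n (e j k w) r - e j k (trm e n w r)
      = (if r = -k then (-(4 : ℂ)⁻¹ * ((n + 2 * k : ℤ) : ℂ)) • e j (n + k) w else 0)
        + (if r = n + k then (-(4 : ℂ)⁻¹ * ((n + 2 * k : ℤ) : ℂ)) • e j (n + k) w else 0) := by
  unfold trm
  split_ifs with h0 h1 h2 h2 h1 h2 h2 <;>
    rw [map_smul, map_sum, ← smul_sub, ← Finset.sum_sub_distrib]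
  · -- 0 ≤ r, r = -k, r = n + k
    rw [Finset.sum_congr rfl (fun i _ => move_thru hrel (n - r) r k i j w),
      Finset.sum_sub_distrib, sum_ite_pair, sum_ite_pair,
      if_pos (show r + k = 0 by omega), if_pos (show n - r + k = 0 by omega),
      show n - r = r by omega, sub_self, smul_zero]
    have hk : ((n + 2 * k : ℤ) : ℂ) = 0 := by rw [show n + 2*k = 0 by omega]; norm_num
    rw [hk]
    norm_num
  · -- 0 ≤ r, r = -k only
    subst h1
    rw [Finset.sum_congr rfl (fun i _ => move_thru hrel (n - -k) (-k) k i j w),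
      Finset.sum_sub_distrib, sum_ite_pair, sum_ite_pair,
      if_pos (show -k + k = 0 by ring), if_neg (show ¬(n - -k + k = 0) by omega),
      sub_zero, add_zero, show n - -k = n + k by ring, smul_smul]
    congr 1
    push_cast
    ring
  · -- 0 ≤ r, r = n + k only
    subst h2
    rw [Finset.sum_congr rfl (fun i _ => move_thru hrel (n - (n+k)) (n+k) k i j w),
      Finset.sum_sub_distrib, sum_ite_pair, sum_ite_pair,
      if_neg (show ¬(n + k + k = 0) by omega), if_pos (show n - (n+k) + k = 0 by ring),
      zero_sub, zero_add, smul_neg, smul_smul, ← neg_smul]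
    congr 1
    push_cast
    ring
  · -- 0 ≤ r, neither
    rw [Finset.sum_congr rfl (fun i _ => move_thru hrel (n - r) r k i j w),
      Finset.sum_sub_distrib, sum_ite_pair, sum_ite_pair,
      if_neg (show ¬(r + k = 0) by omega), if_neg (show ¬(n - r + k = 0) by omega),
      sub_zero, smul_zero]
    norm_num
  · -- r < 0, r = -k, r = n + k
    rw [Finset.sum_congr rfl (fun i _ => move_thru hrel r (n - r) k i j w),
      Finset.sum_sub_distrib, sum_ite_pair, sum_ite_pair,
      if_pos (show n - r + k = 0 by omega), if_pos (show r + k = 0 by omega),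
      show n - r = r by omega, sub_self, smul_zero]
    have hk : ((n + 2 * k : ℤ) : ℂ) = 0 := by rw [show n + 2*k = 0 by omega]; norm_num
    rw [hk]
    norm_num
  · -- r < 0, r = -k only
    subst h1
    rw [Finset.sum_congr rfl (fun i _ => move_thru hrel (-k) (n - -k) k i j w),
      Finset.sum_sub_distrib, sum_ite_pair, sum_ite_pair,
      if_neg (show ¬(n - -k + k = 0) by omega), if_pos (show -k + k = 0 by ring),
      zero_sub, add_zero, show n - -k = n + k by ring,
      smul_neg, smul_smul, ← neg_smul]
    congr 1
    push_cast
    ring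
  · -- r < 0, r = n + k only
    subst h2
    rw [Finset.sum_congr rfl (fun i _ => move_thru hrel (n+k) (n - (n+k)) k i j w),
      Finset.sum_sub_distrib, sum_ite_pair, sum_ite_pair,
      if_pos (show n - (n+k) + k = 0 by ring), if_neg (show ¬(n + k + k = 0) by omega),
      sub_zero, zero_add, smul_smul]
    congr 1
    push_cast
    ring
  · -- r < 0, neither
    rw [Finset.sum_congr rfl (fun i _ => move_thru hrel r (n - r) k i j w),
      Finset.sum_sub_distrib, sum_ite_pair, sum_ite_pair,
      if_neg (show ¬(n - r + k = 0) by omega), if_neg (show ¬(r + k = 0) by omega),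
      sub_zero, smul_zero]
    norm_num

end Part2
section Part3

open Function SugAux

variable {d : ℕ} {W : Type*} [AddCommGroup W] [Module ℂ W]
variable {e : Fin d → ℤ → W →ₗ[ℂ] W}
variable (hrel : ∀ (i j : Fin d) (n m : ℤ) (w : W),
      e i n (e j m w) + e j m (e i n w) = if i = j ∧ n + m = 0 then (-2 : ℂ) • w else 0)
variable (ht : ∀ w : W, ∃ N : ℤ, ∀ (i : Fin d) (n : ℤ), N < n → e i n w = 0)

lemma single_fin {M : Type*} [Zero M] (a : ℤ) (v : M) :
    (support fun r : ℤ => if r = a then v else 0).Finite := by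
  apply Set.Finite.subset (Set.finite_singleton a)
  intro x hx
  simp only [mem_support] at hx
  by_contra hxa
  simp only [Set.mem_singleton_iff] at hxa
  exact hx (if_neg hxa)

lemma single_finsum {M : Type*} [AddCommMonoid M] (a : ℤ) (v : M) :
    (∑ᶠ r : ℤ, if r = a then v else 0) = v := by
  rw [finsum_eq_single _ a (fun x hx => if_neg hx)]
  simp

include hrel ht in
lemma commA (n k : ℤ) (j : Fin d) (w : W) :
    SL e ht n (e j k w) - e j k (SL e ht n w)
      = (-(2 : ℂ)⁻¹ * ((2 * k + n : ℤ) : ℂ)) • e j (n + k) w := by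
  have h2 : e j k (∑ᶠ r, trm e n w r) = ∑ᶠ r, e j k (trm e n w r) := by
    exact AddMonoidHom.map_finsum (e j k).toAddMonoidHom (trm_fin ht n w)
  have hf2 : (support fun r => e j k (trm e n w r)).Finite :=
    (trm_fin ht n w).subset (support_comp_subset (map_zero (e j k)) _)
  rw [SL_apply, SL_apply, h2,
    ← finsum_sub_distrib (trm_fin ht n (e j k w)) hf2,
    finsum_congr (comm_trm hrel n k j w),
    finsum_add_distrib (single_fin (-k) _) (single_fin (n + k) _),
    single_finsum, single_finsum, ← add_smul]
  congr 1
  push_cast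
  ring

include hrel ht in
lemma commA' (n k : ℤ) (j : Fin d) (v : W) :
    SL e ht n (e j k v)
      = e j k (SL e ht n v) + (-(2 : ℂ)⁻¹ * ((2 * k + n : ℤ) : ℂ)) • e j (n + k) v := by
  rw [← commA hrel ht n k j v]
  abel

end Part3
section Part4

open Function SugAux

variable {d : ℕ} {W : Type*} [AddCommGroup W] [Module ℂ W]

/-- First half of the commutator `[SL n, trm m r]`. -/
noncomputable def F1 (e : Fin d → ℤ → W →ₗ[ℂ] W) (n m : ℤ) (w : W) (r : ℤ) : W :=
  if 0 ≤ r then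
    ((16 : ℂ)⁻¹ * ((2 * r - m : ℤ) : ℂ) * ((2 * (m - r) + n : ℤ) : ℂ)) •
      ∑ i : Fin d, e i (n + m - r) (e i r w)
  else
    (-(16 : ℂ)⁻¹ * ((2 * r - m : ℤ) : ℂ) * ((2 * (m - r) + n : ℤ) : ℂ)) •
      ∑ i : Fin d, e i r (e i (n + m - r) w)

/-- Second half of the commutator `[SL n, trm m r]`. -/
noncomputable def F2 (e : Fin d → ℤ → W →ₗ[ℂ] W) (n m : ℤ) (w : W) (r : ℤ) : W :=
  if 0 ≤ r then
    ((16 : ℂ)⁻¹ * ((2 * r - m : ℤ) : ℂ) * ((2 * r + n : ℤ) : ℂ)) •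
      ∑ i : Fin d, e i (m - r) (e i (n + r) w)
  else
    (-(16 : ℂ)⁻¹ * ((2 * r - m : ℤ) : ℂ) * ((2 * r + n : ℤ) : ℂ)) •
      ∑ i : Fin d, e i (n + r) (e i (m - r) w)

variable {e : Fin d → ℤ → W →ₗ[ℂ] W}
variable (hrel : ∀ (i j : Fin d) (n m : ℤ) (w : W),
      e i n (e j m w) + e j m (e i n w) = if i = j ∧ n + m = 0 then (-2 : ℂ) • w else 0)
variable (ht : ∀ w : W, ∃ N : ℤ, ∀ (i : Fin d) (n : ℤ), N < n → e i n w = 0)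

lemma F1_eq_zero {n m : ℤ} {w : W} {N : ℤ}
    (hN : ∀ (i : Fin d) (k : ℤ), N < k → e i k w = 0) {r : ℤ}
    (h : r ∉ Set.Icc (min (n + m - N) 0) (max N 0)) : F1 e n m w r = 0 := by
  rw [Set.mem_Icc, not_and_or, not_le, not_le] at h
  unfold F1
  split_ifs with h0
  · have hNr : N < r := by omega
    simp only [hN _ _ hNr, map_zero, Finset.sum_const_zero, smul_zero]
  · have hNr : N < n + m - r := by omega
    simp only [hN _ _ hNr, map_zero, Finset.sum_const_zero, smul_zero]

lemma F2_eq_zero {n m : ℤ} {w : W} {N : ℤ}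
    (hN : ∀ (i : Fin d) (k : ℤ), N < k → e i k w = 0) {r : ℤ}
    (h : r ∉ Set.Icc (min (m - N) 0) (max (N - n) 0)) : F2 e n m w r = 0 := by
  rw [Set.mem_Icc, not_and_or, not_le, not_le] at h
  unfold F2
  split_ifs with h0
  · have hNr : N < n + r := by omega
    simp only [hN _ _ hNr, map_zero, Finset.sum_const_zero, smul_zero]
  · have hNr : N < m - r := by omega
    simp only [hN _ _ hNr, map_zero, Finset.sum_const_zero, smul_zero]

include ht in
lemma F1_fin (n m : ℤ) (w : W) : (support (F1 e n m w)).Finite := by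
  obtain ⟨N, hN⟩ := ht w
  refine Set.Finite.subset (Set.finite_Icc (min (n + m - N) 0) (max N 0)) ?_
  intro r hr
  by_contra hmem
  exact hr (F1_eq_zero hN hmem)

include ht in
lemma F2_fin (n m : ℤ) (w : W) : (support (F2 e n m w)).Finite := by
  obtain ⟨N, hN⟩ := ht w
  refine Set.Finite.subset (Set.finite_Icc (min (m - N) 0) (max (N - n) 0)) ?_
  intro r hr
  by_contra hmem
  exact hr (F2_eq_zero hN hmem)

include hrel in
lemma Dsplit (n m : ℤ) (w : W) (r : ℤ) :
    SL e ht n (trm e m w r) - trm e m (SL e ht n w) r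
      = F1 e n m w r + F2 e n m w r := by
  have hd : ∀ (a b : ℤ) (i : Fin d) (v : W),
      SL e ht n (e i a (e i b v))
        = e i a (e i b (SL e ht n v))
          + (-(2 : ℂ)⁻¹ * ((2 * b + n : ℤ) : ℂ)) • e i a (e i (n + b) v)
          + (-(2 : ℂ)⁻¹ * ((2 * a + n : ℤ) : ℂ)) • e i (n + a) (e i b v) := by
    intro a b i v
    rw [commA' hrel ht n a i (e i b v), commA' hrel ht n b i v, map_add, map_smul]
  unfold trm F1 F2
  split_ifs with h0
  · rw [map_smul, map_sum, Finset.sum_congr rfl (fun i _ => hd (m - r) r i w),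
      Finset.sum_add_distrib, Finset.sum_add_distrib, ← Finset.smul_sum, ← Finset.smul_sum,
      smul_add, smul_add, smul_smul, smul_smul,
      show n + (m - r) = n + m - r by ring]
    have e1 : -(8 : ℂ)⁻¹ * ((2 * r - m : ℤ) : ℂ) * (-(2 : ℂ)⁻¹ * ((2 * r + n : ℤ) : ℂ))
        = (16 : ℂ)⁻¹ * ((2 * r - m : ℤ) : ℂ) * ((2 * r + n : ℤ) : ℂ) := by
      push_cast; ring
    have e2 : -(8 : ℂ)⁻¹ * ((2 * r - m : ℤ) : ℂ) * (-(2 : ℂ)⁻¹ * ((2 * (m - r) + n : ℤ) : ℂ))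
        = (16 : ℂ)⁻¹ * ((2 * r - m : ℤ) : ℂ) * ((2 * (m - r) + n : ℤ) : ℂ) := by
      push_cast; ring
    rw [e1, e2]
    abel
  · rw [map_smul, map_sum, Finset.sum_congr rfl (fun i _ => hd r (m - r) i w),
      Finset.sum_add_distrib, Finset.sum_add_distrib, ← Finset.smul_sum, ← Finset.smul_sum,
      smul_add, smul_add, smul_smul, smul_smul,
      show n + (m - r) = n + m - r by ring]
    have e1 : (8 : ℂ)⁻¹ * ((2 * r - m : ℤ) : ℂ) * (-(2 : ℂ)⁻¹ * ((2 * (m - r) + n : ℤ) : ℂ))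
        = -(16 : ℂ)⁻¹ * ((2 * r - m : ℤ) : ℂ) * ((2 * (m - r) + n : ℤ) : ℂ) := by
      push_cast; ring
    have e2 : (8 : ℂ)⁻¹ * ((2 * r - m : ℤ) : ℂ) * (-(2 : ℂ)⁻¹ * ((2 * r + n : ℤ) : ℂ))
        = -(16 : ℂ)⁻¹ * ((2 * r - m : ℤ) : ℂ) * ((2 * r + n : ℤ) : ℂ) := by
      push_cast; ring
    rw [e1, e2]
    abel

end Part4
section Part5

open Function SugAux

variable {d : ℕ} {W : Type*} [AddCommGroup W] [Module ℂ W]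

/-- Central correction term. -/
noncomputable def Zc (d : ℕ) (n m : ℤ) (w : W) (r : ℤ) : W :=
  if n + m = 0 then
    ((if 0 ≤ r ∧ r < n then ((d : ℂ) / 8) * ((2 * r - n : ℤ) : ℂ) ^ 2 else 0)
      - (if n ≤ r ∧ r < 0 then ((d : ℂ) / 8) * ((2 * r - n : ℤ) : ℂ) ^ 2 else 0)) • w
  else 0

variable {e : Fin d → ℤ → W →ₗ[ℂ] W}
variable (hrel : ∀ (i j : Fin d) (n m : ℤ) (w : W),
      e i n (e j m w) + e j m (e i n w) = if i = j ∧ n + m = 0 then (-2 : ℂ) • w else 0)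
variable (ht : ∀ w : W, ∃ N : ℤ, ∀ (i : Fin d) (n : ℤ), N < n → e i n w = 0)

include hrel in
lemma main_pt (n m : ℤ) (w : W) (r : ℤ) :
    F1 e n m w r + F2 e n m w (r - n)
      = ((n - m : ℤ) : ℂ) • trm e (n + m) w r + Zc d n m w r := by
  unfold F1 F2 trm Zc
  by_cases hr0 : 0 ≤ r <;> by_cases hrn : 0 ≤ r - n
  · -- 0 ≤ r, n ≤ r
    rw [if_pos hr0, if_pos hrn, if_pos hr0,
      show m - (r - n) = n + m - r by ring, show n + (r - n) = r by ring,
      if_neg (show ¬(0 ≤ r ∧ r < n) by omega), if_neg (show ¬(n ≤ r ∧ r < 0) by omega),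
      sub_zero, zero_smul, ite_self, add_zero]
    push_cast
    module
  · -- 0 ≤ r < n : window 1
    rw [if_pos hr0, if_neg hrn, if_pos hr0,
      show m - (r - n) = n + m - r by ring, show n + (r - n) = r by ring,
      sum_swap_e hrel r (n + m - r) w,
      show r + (n + m - r) = n + m by ring,
      if_neg (show ¬(n ≤ r ∧ r < 0) by omega),
      if_pos (show 0 ≤ r ∧ r < n by omega)]
    by_cases hnm : n + m = 0
    · have hm : m = -n := by omega
      subst hm
      rw [if_pos hnm, if_pos hnm]
      push_cast
      module
    · rw [if_neg hnm, if_neg hnm]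
      push_cast
      module
  · -- n ≤ r < 0 : window 2
    rw [if_neg hr0, if_pos hrn, if_neg hr0,
      show m - (r - n) = n + m - r by ring, show n + (r - n) = r by ring,
      sum_swap_e hrel (n + m - r) r w,
      show n + m - r + r = n + m by ring,
      if_neg (show ¬(0 ≤ r ∧ r < n) by omega),
      if_pos (show n ≤ r ∧ r < 0 by omega)]
    by_cases hnm : n + m = 0
    · have hm : m = -n := by omega
      subst hm
      rw [if_pos hnm, if_pos hnm]
      push_cast
      module
    · rw [if_neg hnm, if_neg hnm]
      push_cast
      module
  · -- r < 0, r < n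
    rw [if_neg hr0, if_neg hrn, if_neg hr0,
      show m - (r - n) = n + m - r by ring, show n + (r - n) = r by ring,
      if_neg (show ¬(0 ≤ r ∧ r < n) by omega), if_neg (show ¬(n ≤ r ∧ r < 0) by omega),
      sub_zero, zero_smul, ite_self, add_zero]
    push_cast
    module

end Part5
section Part6

open Function SugAux

lemma Ico_succ_int (n : ℤ) (hn : 0 ≤ n) :
    Finset.Ico (0 : ℤ) (n + 1) = insert n (Finset.Ico (0 : ℤ) n) := by
  ext x
  simp only [Finset.mem_Ico, Finset.mem_insert]
  omega

lemma sumId (n : ℤ) (hn : 0 ≤ n) :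
    (∑ r ∈ Finset.Ico (0 : ℤ) n, (r : ℂ)) = (n : ℂ) * ((n : ℂ) - 1) / 2 := by
  refine Int.le_induction
    (motive := fun p _ => (∑ r ∈ Finset.Ico (0 : ℤ) p, (r : ℂ)) = (p : ℂ) * ((p : ℂ) - 1) / 2)
    ?_ ?_ n hn
  · norm_num
  · intro k hk ih
    rw [Ico_succ_int k hk, Finset.sum_insert (by simp), ih]
    push_cast
    ring

lemma sumSq (n : ℤ) (hn : 0 ≤ n) :
    (∑ r ∈ Finset.Ico (0 : ℤ) n, (r : ℂ) ^ 2)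
      = (n : ℂ) * ((n : ℂ) - 1) * (2 * (n : ℂ) - 1) / 6 := by
  refine Int.le_induction
    (motive := fun p _ => (∑ r ∈ Finset.Ico (0 : ℤ) p, (r : ℂ) ^ 2)
      = (p : ℂ) * ((p : ℂ) - 1) * (2 * (p : ℂ) - 1) / 6)
    ?_ ?_ n hn
  · norm_num
  · intro k hk ih
    rw [Ico_succ_int k hk, Finset.sum_insert (by simp), ih]
    push_cast
    ring

lemma card_Ico_int (n : ℤ) (hn : 0 ≤ n) :
    (((Finset.Ico (0 : ℤ) n).card : ℕ) : ℂ) = (n : ℂ) := by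
  rw [Int.card_Ico]
  have h : ((n - 0).toNat : ℤ) = n - 0 := Int.toNat_of_nonneg (by omega)
  rw [show ((((n - 0).toNat : ℕ)) : ℂ) = (((n - 0).toNat : ℤ) : ℂ) by push_cast; ring, h]
  push_cast
  ring

lemma sq_sum (n : ℤ) (hn : 0 ≤ n) :
    (∑ r ∈ Finset.Ico (0 : ℤ) n, ((2 * r - n : ℤ) : ℂ) ^ 2)
      = ((n : ℂ) ^ 3 + 2 * (n : ℂ)) / 3 := by
  have hcong : ∀ r ∈ Finset.Ico (0 : ℤ) n,
      ((2 * r - n : ℤ) : ℂ) ^ 2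
        = 4 * (r : ℂ) ^ 2 - 4 * (n : ℂ) * (r : ℂ) + (n : ℂ) ^ 2 := by
    intro r _
    push_cast
    ring
  rw [Finset.sum_congr rfl hcong, Finset.sum_add_distrib, Finset.sum_sub_distrib,
    ← Finset.mul_sum, ← Finset.mul_sum, Finset.sum_const, sumId n hn, sumSq n hn,
    nsmul_eq_mul, card_Ico_int n hn]
  ring

end Part6
section Part7

open Function SugAux

variable {d : ℕ} {W : Type*} [AddCommGroup W] [Module ℂ W]

lemma Zc_eq_zero {n m : ℤ} {w : W} {r : ℤ}
    (h : r ∉ Set.Icc (min n 0) (max n 0)) : Zc d n m w r = 0 := by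
  rw [Set.mem_Icc, not_and_or, not_le, not_le] at h
  have w1 : ¬(0 ≤ r ∧ r < n) := by omega
  have w2 : ¬(n ≤ r ∧ r < 0) := by omega
  unfold Zc
  rw [if_neg w1, if_neg w2, sub_zero, zero_smul, ite_self]

lemma Zc_fin (n m : ℤ) (w : W) : (support (Zc d n m w)).Finite := by
  refine Set.Finite.subset (Set.finite_Icc (min n 0) (max n 0)) ?_
  intro r hr
  by_contra hmem
  exact hr (Zc_eq_zero hmem)

lemma Zc_sum (n m : ℤ) (w : W) :
    (∑ᶠ r, Zc d n m w r)
      = (if n + m = 0 then (d : ℂ) / 24 * ((n : ℂ) ^ 3 + 2 * (n : ℂ)) else 0) • w := by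
  by_cases hnm : n + m = 0
  · rw [if_pos hnm]
    have hg1 : (support fun r : ℤ =>
        (if 0 ≤ r ∧ r < n then ((d : ℂ) / 8) * ((2 * r - n : ℤ) : ℂ) ^ 2 else 0)) ⊆
        ↑(Finset.Ico (0 : ℤ) n) := by
      intro r hr
      simp only [mem_support] at hr
      simp only [Finset.coe_Ico, Set.mem_Ico]
      by_contra h
      exact hr (if_neg (by omega))
    have hg2 : (support fun r : ℤ =>
        (if n ≤ r ∧ r < 0 then ((d : ℂ) / 8) * ((2 * r - n : ℤ) : ℂ) ^ 2 else 0)) ⊆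
        ↑(Finset.Ico n (0 : ℤ)) := by
      intro r hr
      simp only [mem_support] at hr
      simp only [Finset.coe_Ico, Set.mem_Ico]
      by_contra h
      exact hr (if_neg (by omega))
    have hfin1 := Set.Finite.subset (Finset.finite_toSet _) hg1
    have hfin2 := Set.Finite.subset (Finset.finite_toSet _) hg2
    have hstep : ∀ r : ℤ, Zc d n m w r =
        ((if 0 ≤ r ∧ r < n then ((d : ℂ) / 8) * ((2 * r - n : ℤ) : ℂ) ^ 2 else 0)
          - (if n ≤ r ∧ r < 0 then ((d : ℂ) / 8) * ((2 * r - n : ℤ) : ℂ) ^ 2 else 0)) • w := by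
      intro r
      unfold Zc
      rw [if_pos hnm]
    rw [finsum_congr hstep]
    have hsub : (∑ᶠ r : ℤ,
        ((if 0 ≤ r ∧ r < n then ((d : ℂ) / 8) * ((2 * r - n : ℤ) : ℂ) ^ 2 else 0)
          - (if n ≤ r ∧ r < 0 then ((d : ℂ) / 8) * ((2 * r - n : ℤ) : ℂ) ^ 2 else 0)))
        = (∑ᶠ r : ℤ, (if 0 ≤ r ∧ r < n then ((d : ℂ) / 8) * ((2 * r - n : ℤ) : ℂ) ^ 2 else 0))
          - ∑ᶠ r : ℤ, (if n ≤ r ∧ r < 0 then ((d : ℂ) / 8) * ((2 * r - n : ℤ) : ℂ) ^ 2 else 0) :=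
      finsum_sub_distrib hfin1 hfin2
    have hcomb : (support fun r : ℤ =>
        ((if 0 ≤ r ∧ r < n then ((d : ℂ) / 8) * ((2 * r - n : ℤ) : ℂ) ^ 2 else 0)
          - (if n ≤ r ∧ r < 0 then ((d : ℂ) / 8) * ((2 * r - n : ℤ) : ℂ) ^ 2 else 0))).Finite := by
      apply Set.Finite.subset (hfin1.union hfin2)
      intro r hr
      simp only [mem_support] at hr
      by_contra hmem
      simp only [Set.mem_union, mem_support, not_or, not_not] at hmem
      rw [hmem.1, hmem.2, sub_zero] at hr
      exact hr rfl
    rw [← finsum_smul' hcomb w, hsub]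
    have e1 : (∑ᶠ r : ℤ, (if 0 ≤ r ∧ r < n then ((d : ℂ) / 8) * ((2 * r - n : ℤ) : ℂ) ^ 2 else 0))
        = ∑ r ∈ Finset.Ico (0 : ℤ) n, ((d : ℂ) / 8) * ((2 * r - n : ℤ) : ℂ) ^ 2 := by
      rw [finsum_eq_sum_of_support_subset _ hg1]
      refine Finset.sum_congr rfl fun r hr => ?_
      rw [Finset.mem_Ico] at hr
      exact if_pos hr
    have e2 : (∑ᶠ r : ℤ, (if n ≤ r ∧ r < 0 then ((d : ℂ) / 8) * ((2 * r - n : ℤ) : ℂ) ^ 2 else 0))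
        = ∑ r ∈ Finset.Ico n (0 : ℤ), ((d : ℂ) / 8) * ((2 * r - n : ℤ) : ℂ) ^ 2 := by
      rw [finsum_eq_sum_of_support_subset _ hg2]
      refine Finset.sum_congr rfl fun r hr => ?_
      rw [Finset.mem_Ico] at hr
      exact if_pos hr
    rw [e1, e2]
    congr 1
    by_cases hn : 0 ≤ n
    · rw [Finset.Ico_eq_empty (show ¬ n < 0 by omega), Finset.sum_empty, sub_zero,
        ← Finset.mul_sum, sq_sum n hn]
      ring
    · rw [Finset.Ico_eq_empty (show ¬ (0 : ℤ) < n by omega), Finset.sum_empty, zero_sub]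
      have hmap : Finset.Ico n (0 : ℤ)
          = Finset.map (addLeftEmbedding n) (Finset.Ico (0 : ℤ) (-n)) := by
        rw [Finset.map_add_left_Ico, add_zero, add_neg_cancel]
      rw [hmap, Finset.sum_map]
      have hcong : ∀ x ∈ Finset.Ico (0 : ℤ) (-n),
          ((d : ℂ) / 8) * ((2 * (addLeftEmbedding n x) - n : ℤ) : ℂ) ^ 2
            = ((d : ℂ) / 8) * ((2 * x - (-n) : ℤ) : ℂ) ^ 2 := by
        intro x _
        rw [addLeftEmbedding_apply, show 2 * (n + x) - n = 2 * x - (-n) by ring]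
      rw [Finset.sum_congr rfl hcong, ← Finset.mul_sum, sq_sum (-n) (by omega)]
      push_cast
      ring
  · have hz : ∀ r : ℤ, Zc d n m w r = 0 := fun r => by unfold Zc; rw [if_neg hnm]
    rw [finsum_congr hz, if_neg hnm, zero_smul, finsum_zero]

end Part7
section Part8

open Function SugAux

variable {d : ℕ} {W : Type*} [AddCommGroup W] [Module ℂ W]
variable {e : Fin d → ℤ → W →ₗ[ℂ] W}
variable (hrel : ∀ (i j : Fin d) (n m : ℤ) (w : W),
      e i n (e j m w) + e j m (e i n w) = if i = j ∧ n + m = 0 then (-2 : ℂ) • w else 0)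
variable (ht : ∀ w : W, ∃ N : ℤ, ∀ (i : Fin d) (n : ℤ), N < n → e i n w = 0)

include hrel in
lemma key (n m : ℤ) (w : W) :
    SL e ht n (SL e ht m w) - SL e ht m (SL e ht n w)
      = ((n - m : ℤ) : ℂ) • SL e ht (n + m) w
        + (if n + m = 0 then (d : ℂ) / 24 * ((n : ℂ) ^ 3 + 2 * (n : ℂ)) else 0) • w := by
  have h1 : SL e ht n (SL e ht m w) = ∑ᶠ r, SL e ht n (trm e m w r) := by
    rw [SL_apply ht m w]
    exact AddMonoidHom.map_finsum (SL e ht n).toAddMonoidHom (trm_fin ht m w)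
  have h2 : SL e ht m (SL e ht n w) = ∑ᶠ r, trm e m (SL e ht n w) r := rfl
  have hfD1 : (support fun r => SL e ht n (trm e m w r)).Finite :=
    (trm_fin ht m w).subset (support_comp_subset (map_zero _) _)
  have hfD2 : (support (trm e m (SL e ht n w))).Finite := trm_fin ht m _
  have hf2shift : (support fun r : ℤ => F2 e n m w (r - n)).Finite := by
    have heq : (support fun r : ℤ => F2 e n m w (r - n))
        = (fun r : ℤ => r - n) ⁻¹' (support (F2 e n m w)) := rfl
    rw [heq]
    exact (F2_fin ht n m w).preimage
      (Set.injOn_of_injective (fun a b hab => by omega))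
  have hGfin : (support fun r => ((n - m : ℤ) : ℂ) • trm e (n + m) w r).Finite := by
    refine (trm_fin ht (n + m) w).subset ?_
    intro r hr
    simp only [mem_support] at hr ⊢
    exact fun h => hr (by rw [h, smul_zero])
  have hshift : (∑ᶠ r, F2 e n m w r) = ∑ᶠ r, F2 e n m w (r - n) :=
    (finsum_comp_equiv (Equiv.subRight n)).symm
  rw [h1, h2, ← finsum_sub_distrib hfD1 hfD2,
    finsum_congr (fun r => Dsplit hrel ht n m w r),
    finsum_add_distrib (F1_fin ht n m w) (F2_fin ht n m w), hshift,
    ← finsum_add_distrib (F1_fin ht n m w) hf2shift,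
    finsum_congr (fun r => main_pt hrel n m w r),
    finsum_add_distrib hGfin (Zc_fin n m w), Zc_sum]
  congr 1
  rw [SL_apply ht (n + m) w]
  exact (smul_finsum' _ (trm_fin ht (n + m) w)).symm

end Part8

section Part9

open Function SugAux

variable {d : ℕ} {W : Type*} [AddCommGroup W] [Module ℂ W]
variable {e : Fin d → ℤ → W →ₗ[ℂ] W}
variable (ht : ∀ w : W, ∃ N : ℤ, ∀ (i : Fin d) (n : ℤ), N < n → e i n w = 0)

lemma sug_eq_SL (p : ℤ) (u : W) :
    sugawaraOp e p u = SL e ht p u + (if p = 0 then ((d : ℂ) / 16) else 0) • u := by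
  rw [ite_smul, zero_smul]
  rfl

end Part9

open Function SugAux in
/-- The Sugawara operators `L^{Cℓ}_n` on a locally-truncated module `W` over the
Ramond Clifford algebra define a Virasoro action of central charge `d/2`:
`[L^{Cℓ}_n, L^{Cℓ}_m] = (n−m) L^{Cℓ}_{n+m} + (d/24)(n³−n) δ_{n+m,0}`. -/
theorem stmt7 {d : ℕ} {W : Type*} [AddCommGroup W] [Module ℂ W]
    (e : Fin d → ℤ → W →ₗ[ℂ] W)
    (hrel : ∀ (i j : Fin d) (n m : ℤ) (w : W),
      e i n (e j m w) + e j m (e i n w) = if i = j ∧ n + m = 0 then (-2 : ℂ) • w else 0)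
    (htrunc : ∀ w : W, ∃ N : ℤ, ∀ (i : Fin d) (n : ℤ), N < n → e i n w = 0) :
    ∀ (n m : ℤ) (w : W),
      sugawaraOp e n (sugawaraOp e m w) - sugawaraOp e m (sugawaraOp e n w)
        = ((n - m : ℤ) : ℂ) • sugawaraOp e (n + m) w
          + (if n + m = 0 then ((d : ℂ) / 24) * ((n : ℂ) ^ 3 - (n : ℂ)) else 0) • w := by
  intro n m w
  set cn : ℂ := if n = 0 then ((d : ℂ) / 16) else 0 with hcn
  set cm : ℂ := if m = 0 then ((d : ℂ) / 16) else 0 with hcm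
  calc sugawaraOp e n (sugawaraOp e m w) - sugawaraOp e m (sugawaraOp e n w)
      = SL e htrunc n (SL e htrunc m w) - SL e htrunc m (SL e htrunc n w) := by
        rw [sug_eq_SL htrunc m w, sug_eq_SL htrunc n w,
          sug_eq_SL htrunc n (SL e htrunc m w + cm • w),
          sug_eq_SL htrunc m (SL e htrunc n w + cn • w),
          map_add, map_add, map_smul, map_smul, smul_add, smul_add,
          smul_smul, smul_smul, mul_comm cn cm]
        abel
    _ = ((n - m : ℤ) : ℂ) • SL e htrunc (n + m) w
          + (if n + m = 0 then (d : ℂ) / 24 * ((n : ℂ) ^ 3 + 2 * (n : ℂ)) else 0) • w :=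
        key hrel htrunc n m w
    _ = ((n - m : ℤ) : ℂ) • sugawaraOp e (n + m) w
          + (if n + m = 0 then ((d : ℂ) / 24) * ((n : ℂ) ^ 3 - (n : ℂ)) else 0) • w := by
        rw [sug_eq_SL htrunc (n + m) w, smul_add, smul_smul, add_assoc]
        congr 1
        rw [← add_smul]
        congr 1
        by_cases hnm : n + m = 0
        · have hm : m = -n := by omega
          subst hm
          rw [if_pos hnm, if_pos hnm, if_pos hnm]
          push_cast
          ring
        · rw [if_neg hnm, if_neg hnm, if_neg hnm]
          ring
end

section
/- Under the hypotheses of the Chern–Simons setup, for A ∈ g the Cartan-model identities hold: (d_G CS_{λ*}(Θ))_A = λ*(Ω∧Ω) − λ*(A, dΘ), and (d_G λ*(−,Θ))_A = λ*(A, dΘ) − λ*(A,A), where d_G is the Cartan differential (d_G ξ)_A = dξ_A − ι_{A^P} ξ_A. -/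
set_option maxHeartbeats 16000000


/-- The Cartan-model identities `(d_G CS_{λ*}(Θ))_A = λ*(Ω∧Ω) − λ*(A,dΘ)` and
`(d_G λ*(−,Θ))_A = λ*(A,dΘ) − λ*(A,A)`.

Algebraic model (as in the Chern–Simons setup): `C` the functions on `P`, `T` the
vector fields, `Fg` the `g`-valued functions, `fund A = A^P` the fundamental vector
fields, `const : g → Fg` the constant functions, `Θ` the connection
(`Θ(A^P) = A`, equivariance `L_{A^P}Θ = −[A,Θ]`), `dΘ` and `Ω` as usual.
The equation of degree-4 Cartan cochains splits into a 4-form part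
`dCS = λ*(Ω∧Ω)` and a 2-form part `ι_{A^P}CS = λ*(A,dΘ)`; the second equation
splits into `d(λ*(A,Θ)) = λ*(A,dΘ)` and `λ*(A, Θ(A^P)) = λ*(A,A)`. -/
theorem stmt13 {C T Fg g : Type*} [CommRing C] [Algebra ℝ C] [LieRing T]
    [LieRing Fg] [Module ℝ Fg] [LieRing g]
    (ac : T → C → C) (acg : T → Fg → Fg) (lamF : Fg → Fg → C) (Θ : T → Fg)
    (fund : g → T) (const : g → Fg)
    (hacadd : ∀ X f f', ac X (f + f') = ac X f + ac X f')
    (hacsmul : ∀ X (r : ℝ) (f : C), ac X (r • f) = r • ac X f)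
    (haclie : ∀ X Y f, ac ⁅X, Y⁆ f = ac X (ac Y f) - ac Y (ac X f))
    (hacgadd : ∀ X u v, acg X (u + v) = acg X u + acg X v)
    (hacglie : ∀ X Y u, acg ⁅X, Y⁆ u = acg X (acg Y u) - acg Y (acg X u))
    (hacgbr : ∀ X u v, acg X ⁅u, v⁆ = ⁅acg X u, v⁆ + ⁅u, acg X v⁆)
    (hlamadd1 : ∀ u u' v, lamF (u + u') v = lamF u v + lamF u' v)
    (hlamadd2 : ∀ u v v', lamF u (v + v') = lamF u v + lamF u v')
    (hlamsymm : ∀ u v, lamF u v = lamF v u)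
    (hlaminv : ∀ w u v : Fg, lamF ⁅w, u⁆ v + lamF u ⁅w, v⁆ = 0)
    (hlamder : ∀ X u v, ac X (lamF u v) = lamF (acg X u) v + lamF u (acg X v))
    (hΘadd : ∀ X Y, Θ (X + Y) = Θ X + Θ Y)
    -- the `G`-action: fundamental vector fields, constants, connection axioms
    (hfund : ∀ a b : g, fund ⁅a, b⁆ = ⁅fund a, fund b⁆)
    (hconstbr : ∀ a b : g, const ⁅a, b⁆ = ⁅const a, const b⁆)
    (hΘfund : ∀ a : g, Θ (fund a) = const a)
    (hconstder : ∀ (X : T) (a : g), acg X (const a) = 0)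
    (hequivΘ : ∀ (a : g) (X : T),
      acg (fund a) (Θ X) - Θ ⁅fund a, X⁆ = - ⁅const a, Θ X⁆)
    -- `dΘ`, curvature, and the Chern–Simons 3-form
    (dΘ : T → T → Fg)
    (hdΘ : ∀ X Y, dΘ X Y = acg X (Θ Y) - acg Y (Θ X) - Θ ⁅X, Y⁆)
    (Om : T → T → Fg)
    (hOm : ∀ X Y, Om X Y = dΘ X Y + ⁅Θ X, Θ Y⁆)
    (CS : T → T → T → C)
    (hCS : ∀ X Y Z, CS X Y Z
      = lamF (Θ X) (Om Y Z) - lamF (Θ Y) (Om X Z) + lamF (Θ Z) (Om X Y)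
        - (6 : ℝ)⁻¹ •
          (lamF (Θ X) (⁅Θ Y, Θ Z⁆ - ⁅Θ Z, Θ Y⁆)
            - lamF (Θ Y) (⁅Θ X, Θ Z⁆ - ⁅Θ Z, Θ X⁆)
            + lamF (Θ Z) (⁅Θ X, Θ Y⁆ - ⁅Θ Y, Θ X⁆))) :
    -- `(d_G CS)_A = λ*(Ω∧Ω) − λ*(A,dΘ)`:
    (∀ X Y Z Wv : T,
      ac X (CS Y Z Wv) - ac Y (CS X Z Wv) + ac Z (CS X Y Wv) - ac Wv (CS X Y Z)
        - CS ⁅X, Y⁆ Z Wv + CS ⁅X, Z⁆ Y Wv - CS ⁅X, Wv⁆ Y Z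
        - CS ⁅Y, Z⁆ X Wv + CS ⁅Y, Wv⁆ X Z - CS ⁅Z, Wv⁆ X Y
      = lamF (Om X Y) (Om Z Wv) - lamF (Om X Z) (Om Y Wv) + lamF (Om X Wv) (Om Y Z)
          + lamF (Om Y Z) (Om X Wv) - lamF (Om Y Wv) (Om X Z)
          + lamF (Om Z Wv) (Om X Y)) ∧
    (∀ (a : g) (X Y : T), CS (fund a) X Y = lamF (const a) (dΘ X Y)) ∧
    -- `(d_G λ*(−,Θ))_A = λ*(A,dΘ) − λ*(A,A)`:
    (∀ (a : g) (X Y : T),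
      ac X (lamF (const a) (Θ Y)) - ac Y (lamF (const a) (Θ X))
        - lamF (const a) (Θ ⁅X, Y⁆) = lamF (const a) (dΘ X Y)) ∧
    (∀ a : g, lamF (const a) (Θ (fund a)) = lamF (const a) (const a)) := by
  -- derived linearity facts
  have hlz2 : ∀ u : Fg, lamF u 0 = 0 := by
    intro u
    have h := hlamadd2 u 0 0
    rw [add_zero] at h
    exact (left_eq_add.mp h)
  have hln2 : ∀ u v : Fg, lamF u (-v) = - lamF u v := by
    intro u v
    have h := hlamadd2 u v (-v)
    rw [add_neg_cancel, hlz2] at h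
    linear_combination -h
  have hls2 : ∀ u v w : Fg, lamF u (v - w) = lamF u v - lamF u w := by
    intro u v w
    rw [sub_eq_add_neg, hlamadd2, hln2, sub_eq_add_neg]
  have hlz1 : ∀ u : Fg, lamF 0 u = 0 := fun u => by rw [hlamsymm, hlz2]
  have hln1 : ∀ u v : Fg, lamF (-u) v = - lamF u v := fun u v => by
    rw [hlamsymm, hln2, hlamsymm]
  have hls1 : ∀ u v w : Fg, lamF (u - v) w = lamF u w - lamF v w := fun u v w => by
    rw [sub_eq_add_neg, hlamadd1, hln1, sub_eq_add_neg]
  have hΘzero : Θ 0 = 0 := by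
    have h := hΘadd 0 0
    rw [add_zero] at h
    exact (left_eq_add.mp h)
  have hΘneg : ∀ X : T, Θ (-X) = - Θ X := by
    intro X
    have h := hΘadd X (-X)
    rw [add_neg_cancel, hΘzero] at h
    exact (neg_eq_of_add_eq_zero_right h.symm).symm
  have hΘsub : ∀ X Y : T, Θ (X - Y) = Θ X - Θ Y := fun X Y => by
    rw [sub_eq_add_neg, hΘadd, hΘneg, sub_eq_add_neg]
  have hacgz : ∀ X : T, acg X (0 : Fg) = 0 := by
    intro X
    have h := hacgadd X 0 0
    rw [add_zero] at h
    exact (left_eq_add.mp h)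
  have hacgn : ∀ (X : T) (u : Fg), acg X (-u) = - acg X u := by
    intro X u
    have h := hacgadd X u (-u)
    rw [add_neg_cancel, hacgz] at h
    exact (neg_eq_of_add_eq_zero_right h.symm).symm
  have hacgs : ∀ (X : T) (u v : Fg), acg X (u - v) = acg X u - acg X v := fun X u v => by
    rw [sub_eq_add_neg, hacgadd, hacgn, sub_eq_add_neg]
  have hacz : ∀ X : T, ac X (0 : C) = 0 := by
    intro X
    have h := hacadd X 0 0
    rw [add_zero] at h
    exact (left_eq_add.mp h)
  have hacn : ∀ (X : T) (f : C), ac X (-f) = - ac X f := by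
    intro X f
    have h := hacadd X f (-f)
    rw [add_neg_cancel, hacz] at h
    linear_combination -h
  have hacs : ∀ (X : T) (f f' : C), ac X (f - f') = ac X f - ac X f' := fun X f f' => by
    rw [sub_eq_add_neg, hacadd, hacn, sub_eq_add_neg]
  -- skew-symmetry through `lamF`
  have hskew2 : ∀ u v w : Fg, lamF u ⁅w, v⁆ = - lamF u ⁅v, w⁆ := fun u v w => by
    rw [← lie_skew, hln2]
  -- ad-invariance in "associativity" form
  have hassoc : ∀ u v w : Fg, lamF ⁅u, v⁆ w = lamF u ⁅v, w⁆ := by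
    intro u v w
    have h1 := hlaminv v u w
    have h2 : lamF ⁅v, u⁆ w = - lamF ⁅u, v⁆ w := by
      rw [show (⁅v, u⁆ : Fg) = -⁅u, v⁆ from (lie_skew v u).symm, hln1]
    linear_combination h2 - h1
  -- `Ω(A^P, X) = 0`
  have hOmfund : ∀ (a : g) (X : T), Om (fund a) X = 0 := by
    intro a X
    rw [hOm, hdΘ, hΘfund, hconstder, sub_zero, hequivΘ a X]
    exact neg_add_cancel _
  refine ⟨?_, ?_, ?_, ?_⟩
  · -- first part : `d CS = λ*(Ω ∧ Ω)`
    intro X Y Z Wv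
    have hjac : ∀ (u : Fg) (a b c : T),
        lamF (Θ ⁅a, ⁅b, c⁆⁆) u - lamF (Θ ⁅b, ⁅a, c⁆⁆) u + lamF (Θ ⁅c, ⁅a, b⁆⁆) u = 0 := by
      intro u a b c
      have h0 : Θ ⁅a, ⁅b, c⁆⁆ - Θ ⁅b, ⁅a, c⁆⁆ + Θ ⁅c, ⁅a, b⁆⁆ = 0 := by
        rw [← hΘsub, ← hΘadd]
        rw [show (⁅a, ⁅b, c⁆⁆ - ⁅b, ⁅a, c⁆⁆ + ⁅c, ⁅a, b⁆⁆ : T) = 0 by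
          rw [← lie_lie, ← lie_skew c ⁅a, b⁆]; exact add_neg_cancel _]
        exact hΘzero
      rw [← hls1, ← hlamadd1, h0, hlz1]
    have hquad : ∀ u x y z : Fg,
        lamF u ⁅x, ⁅y, z⁆⁆ - lamF u ⁅y, ⁅x, z⁆⁆ + lamF u ⁅z, ⁅x, y⁆⁆ = 0 := by
      intro u x y z
      rw [← hls2, ← hlamadd2]
      rw [show (⁅x, ⁅y, z⁆⁆ - ⁅y, ⁅x, z⁆⁆ + ⁅z, ⁅x, y⁆⁆ : Fg) = 0 by
        rw [← lie_lie, ← lie_skew z ⁅x, y⁆]; exact add_neg_cancel _]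
      exact hlz2 _
    have hsYX : (⁅Y, X⁆ : T) = -⁅X, Y⁆ := neg_eq_iff_eq_neg.mp (lie_skew X Y)
    have hsZX : (⁅Z, X⁆ : T) = -⁅X, Z⁆ := neg_eq_iff_eq_neg.mp (lie_skew X Z)
    have hsWX : (⁅Wv, X⁆ : T) = -⁅X, Wv⁆ := neg_eq_iff_eq_neg.mp (lie_skew X Wv)
    have hsZY : (⁅Z, Y⁆ : T) = -⁅Y, Z⁆ := neg_eq_iff_eq_neg.mp (lie_skew Y Z)
    have hsWY : (⁅Wv, Y⁆ : T) = -⁅Y, Wv⁆ := neg_eq_iff_eq_neg.mp (lie_skew Y Wv)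
    have hsWZ : (⁅Wv, Z⁆ : T) = -⁅Z, Wv⁆ := neg_eq_iff_eq_neg.mp (lie_skew Z Wv)
    simp only [hCS, hOm, hdΘ, lie_lie, hsYX, hsZX, hsWX, hsZY, hsWY, hsWZ, lie_neg,
      neg_lie, hΘadd, hΘsub, hΘneg, hacgadd, hacgs, hacgn, hacgbr, hacglie,
      hlamadd1, hlamadd2, hls1, hls2, hln1, hln2, hlamder, hacadd, hacs, hacn, hacsmul]
    linear_combination (norm := module)
      ((-1 : ℝ)/2) • (hskew2 (acg X (Θ Y)) (Θ Wv) (Θ Z))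
      + ((2 : ℝ)/3) • (hlamsymm (Θ Y) ⁅(acg X (Θ Z)), (Θ Wv)⁆)
      + ((2 : ℝ)/3) • (hassoc (acg X (Θ Z)) (Θ Wv) (Θ Y))
      + ((5 : ℝ)/6) • (hskew2 (Θ Y) (acg X (Θ Wv)) (Θ Z))
      + ((-2 : ℝ)/3) • (hlamsymm (Θ Y) ⁅(acg X (Θ Wv)), (Θ Z)⁆)
      + ((-2 : ℝ)/3) • (hassoc (acg X (Θ Wv)) (Θ Z) (Θ Y))
      + ((-1 : ℝ)/2) • (hskew2 (acg X (Θ Wv)) (Θ Y) (Θ Z))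
      + ((1 : ℝ)/2) • (hskew2 (acg X (Θ Z)) (Θ Wv) (Θ Y))
      + ((-2 : ℝ)/3) • (hlamsymm (Θ Z) ⁅(acg X (Θ Y)), (Θ Wv)⁆)
      + ((-2 : ℝ)/3) • (hassoc (acg X (Θ Y)) (Θ Wv) (Θ Z))
      + ((-5 : ℝ)/6) • (hskew2 (Θ Z) (acg X (Θ Wv)) (Θ Y))
      + ((2 : ℝ)/3) • (hlamsymm (Θ Z) ⁅(acg X (Θ Wv)), (Θ Y)⁆)
      + ((2 : ℝ)/3) • (hassoc (acg X (Θ Wv)) (Θ Y) (Θ Z))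
      + ((2 : ℝ)/3) • (hlamsymm (Θ Wv) ⁅(acg X (Θ Y)), (Θ Z)⁆)
      + ((2 : ℝ)/3) • (hassoc (acg X (Θ Y)) (Θ Z) (Θ Wv))
      + ((5 : ℝ)/6) • (hskew2 (Θ Wv) (acg X (Θ Z)) (Θ Y))
      + ((-2 : ℝ)/3) • (hlamsymm (Θ Wv) ⁅(acg X (Θ Z)), (Θ Y)⁆)
      + ((-2 : ℝ)/3) • (hassoc (acg X (Θ Z)) (Θ Y) (Θ Wv))
      + ((1 : ℝ)/6) • (hskew2 (Θ Y) (acg X (Θ Z)) (Θ Wv))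
      + ((-1 : ℝ)/6) • (hskew2 (Θ Z) (acg X (Θ Y)) (Θ Wv))
      + ((1 : ℝ)/6) • (hskew2 (Θ Wv) (acg X (Θ Y)) (Θ Z))
      + ((1 : ℝ)/2) • (hskew2 (acg Y (Θ X)) (Θ Wv) (Θ Z))
      + ((-2 : ℝ)/3) • (hlamsymm (Θ X) ⁅(acg Y (Θ Z)), (Θ Wv)⁆)
      + ((-2 : ℝ)/3) • (hassoc (acg Y (Θ Z)) (Θ Wv) (Θ X))
      + ((-5 : ℝ)/6) • (hskew2 (Θ X) (acg Y (Θ Wv)) (Θ Z))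
      + ((2 : ℝ)/3) • (hlamsymm (Θ X) ⁅(acg Y (Θ Wv)), (Θ Z)⁆)
      + ((2 : ℝ)/3) • (hassoc (acg Y (Θ Wv)) (Θ Z) (Θ X))
      + ((1 : ℝ)/2) • (hskew2 (acg Y (Θ Wv)) (Θ X) (Θ Z))
      + ((-1 : ℝ)/2) • (hskew2 (acg Y (Θ Z)) (Θ Wv) (Θ X))
      + ((2 : ℝ)/3) • (hlamsymm (Θ Z) ⁅(acg Y (Θ X)), (Θ Wv)⁆)
      + ((2 : ℝ)/3) • (hassoc (acg Y (Θ X)) (Θ Wv) (Θ Z))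
      + ((5 : ℝ)/6) • (hskew2 (Θ Z) (acg Y (Θ Wv)) (Θ X))
      + ((-2 : ℝ)/3) • (hlamsymm (Θ Z) ⁅(acg Y (Θ Wv)), (Θ X)⁆)
      + ((-2 : ℝ)/3) • (hassoc (acg Y (Θ Wv)) (Θ X) (Θ Z))
      + ((-2 : ℝ)/3) • (hlamsymm (Θ Wv) ⁅(acg Y (Θ X)), (Θ Z)⁆)
      + ((-2 : ℝ)/3) • (hassoc (acg Y (Θ X)) (Θ Z) (Θ Wv))
      + ((-5 : ℝ)/6) • (hskew2 (Θ Wv) (acg Y (Θ Z)) (Θ X))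
      + ((2 : ℝ)/3) • (hlamsymm (Θ Wv) ⁅(acg Y (Θ Z)), (Θ X)⁆)
      + ((2 : ℝ)/3) • (hassoc (acg Y (Θ Z)) (Θ X) (Θ Wv))
      + ((-1 : ℝ)/6) • (hskew2 (Θ X) (acg Y (Θ Z)) (Θ Wv))
      + ((1 : ℝ)/6) • (hskew2 (Θ Z) (acg Y (Θ X)) (Θ Wv))
      + ((-1 : ℝ)/6) • (hskew2 (Θ Wv) (acg Y (Θ X)) (Θ Z))
      + ((-1 : ℝ)/2) • (hskew2 (acg Z (Θ X)) (Θ Wv) (Θ Y))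
      + ((2 : ℝ)/3) • (hlamsymm (Θ X) ⁅(acg Z (Θ Y)), (Θ Wv)⁆)
      + ((2 : ℝ)/3) • (hassoc (acg Z (Θ Y)) (Θ Wv) (Θ X))
      + ((5 : ℝ)/6) • (hskew2 (Θ X) (acg Z (Θ Wv)) (Θ Y))
      + ((-2 : ℝ)/3) • (hlamsymm (Θ X) ⁅(acg Z (Θ Wv)), (Θ Y)⁆)
      + ((-2 : ℝ)/3) • (hassoc (acg Z (Θ Wv)) (Θ Y) (Θ X))
      + ((-1 : ℝ)/2) • (hskew2 (acg Z (Θ Wv)) (Θ X) (Θ Y))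
      + ((1 : ℝ)/2) • (hskew2 (acg Z (Θ Y)) (Θ Wv) (Θ X))
      + ((-2 : ℝ)/3) • (hlamsymm (Θ Y) ⁅(acg Z (Θ X)), (Θ Wv)⁆)
      + ((-2 : ℝ)/3) • (hassoc (acg Z (Θ X)) (Θ Wv) (Θ Y))
      + ((-5 : ℝ)/6) • (hskew2 (Θ Y) (acg Z (Θ Wv)) (Θ X))
      + ((2 : ℝ)/3) • (hlamsymm (Θ Y) ⁅(acg Z (Θ Wv)), (Θ X)⁆)
      + ((2 : ℝ)/3) • (hassoc (acg Z (Θ Wv)) (Θ X) (Θ Y))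
      + ((2 : ℝ)/3) • (hlamsymm (Θ Wv) ⁅(acg Z (Θ X)), (Θ Y)⁆)
      + ((2 : ℝ)/3) • (hassoc (acg Z (Θ X)) (Θ Y) (Θ Wv))
      + ((5 : ℝ)/6) • (hskew2 (Θ Wv) (acg Z (Θ Y)) (Θ X))
      + ((-2 : ℝ)/3) • (hlamsymm (Θ Wv) ⁅(acg Z (Θ Y)), (Θ X)⁆)
      + ((-2 : ℝ)/3) • (hassoc (acg Z (Θ Y)) (Θ X) (Θ Wv))
      + ((1 : ℝ)/6) • (hskew2 (Θ X) (acg Z (Θ Y)) (Θ Wv))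
      + ((-1 : ℝ)/6) • (hskew2 (Θ Y) (acg Z (Θ X)) (Θ Wv))
      + ((1 : ℝ)/6) • (hskew2 (Θ Wv) (acg Z (Θ X)) (Θ Y))
      + ((-2 : ℝ)/3) • (hlamsymm (Θ X) ⁅(acg Wv (Θ Y)), (Θ Z)⁆)
      + ((-2 : ℝ)/3) • (hassoc (acg Wv (Θ Y)) (Θ Z) (Θ X))
      + ((-1 : ℝ)/2) • (hskew2 (acg Wv (Θ Y)) (Θ X) (Θ Z))
      + ((-5 : ℝ)/6) • (hskew2 (Θ X) (acg Wv (Θ Z)) (Θ Y))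
      + ((2 : ℝ)/3) • (hlamsymm (Θ X) ⁅(acg Wv (Θ Z)), (Θ Y)⁆)
      + ((2 : ℝ)/3) • (hassoc (acg Wv (Θ Z)) (Θ Y) (Θ X))
      + ((1 : ℝ)/2) • (hskew2 (acg Wv (Θ Z)) (Θ X) (Θ Y))
      + ((2 : ℝ)/3) • (hlamsymm (Θ Y) ⁅(acg Wv (Θ X)), (Θ Z)⁆)
      + ((2 : ℝ)/3) • (hassoc (acg Wv (Θ X)) (Θ Z) (Θ Y))
      + ((1 : ℝ)/2) • (hskew2 (acg Wv (Θ X)) (Θ Y) (Θ Z))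
      + ((5 : ℝ)/6) • (hskew2 (Θ Y) (acg Wv (Θ Z)) (Θ X))
      + ((-2 : ℝ)/3) • (hlamsymm (Θ Y) ⁅(acg Wv (Θ Z)), (Θ X)⁆)
      + ((-2 : ℝ)/3) • (hassoc (acg Wv (Θ Z)) (Θ X) (Θ Y))
      + ((-2 : ℝ)/3) • (hlamsymm (Θ Z) ⁅(acg Wv (Θ X)), (Θ Y)⁆)
      + ((-2 : ℝ)/3) • (hassoc (acg Wv (Θ X)) (Θ Y) (Θ Z))
      + ((-5 : ℝ)/6) • (hskew2 (Θ Z) (acg Wv (Θ Y)) (Θ X))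
      + ((2 : ℝ)/3) • (hlamsymm (Θ Z) ⁅(acg Wv (Θ Y)), (Θ X)⁆)
      + ((2 : ℝ)/3) • (hassoc (acg Wv (Θ Y)) (Θ X) (Θ Z))
      + ((-1 : ℝ)/6) • (hskew2 (Θ X) (acg Wv (Θ Y)) (Θ Z))
      + ((1 : ℝ)/6) • (hskew2 (Θ Y) (acg Wv (Θ X)) (Θ Z))
      + ((-1 : ℝ)/6) • (hskew2 (Θ Z) (acg Wv (Θ X)) (Θ Y))
      + ((1 : ℝ)/2) • (hskew2 (Θ (⁅X, Y⁆)) (Θ Wv) (Θ Z))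
      + (-2 : ℝ) • (hlamsymm (Θ Z) (Θ (⁅X, ⁅Y, Wv⁆⁆)))
      + (2 : ℝ) • (hlamsymm (Θ Z) (Θ (⁅Y, ⁅X, Wv⁆⁆)))
      + ((2 : ℝ)/3) • (hlamsymm (Θ Z) ⁅(Θ (⁅X, Y⁆)), (Θ Wv)⁆)
      + ((2 : ℝ)/3) • (hassoc (Θ (⁅X, Y⁆)) (Θ Wv) (Θ Z))
      + (2 : ℝ) • (hlamsymm (Θ Wv) (Θ (⁅X, ⁅Y, Z⁆⁆)))
      + (-2 : ℝ) • (hlamsymm (Θ Wv) (Θ (⁅Y, ⁅X, Z⁆⁆)))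
      + ((-2 : ℝ)/3) • (hlamsymm (Θ Wv) ⁅(Θ (⁅X, Y⁆)), (Θ Z)⁆)
      + ((-2 : ℝ)/3) • (hassoc (Θ (⁅X, Y⁆)) (Θ Z) (Θ Wv))
      + ((1 : ℝ)/6) • (hskew2 (Θ Z) (Θ (⁅X, Y⁆)) (Θ Wv))
      + ((-1 : ℝ)/6) • (hskew2 (Θ Wv) (Θ (⁅X, Y⁆)) (Θ Z))
      + ((-1 : ℝ)/2) • (hskew2 (Θ (⁅X, Z⁆)) (Θ Wv) (Θ Y))
      + (2 : ℝ) • (hlamsymm (Θ Y) (Θ (⁅X, ⁅Z, Wv⁆⁆)))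
      + (-2 : ℝ) • (hlamsymm (Θ Y) (Θ (⁅Z, ⁅X, Wv⁆⁆)))
      + ((-2 : ℝ)/3) • (hlamsymm (Θ Y) ⁅(Θ (⁅X, Z⁆)), (Θ Wv)⁆)
      + ((-2 : ℝ)/3) • (hassoc (Θ (⁅X, Z⁆)) (Θ Wv) (Θ Y))
      + (2 : ℝ) • (hlamsymm (Θ Wv) (Θ (⁅Z, ⁅X, Y⁆⁆)))
      + ((2 : ℝ)/3) • (hlamsymm (Θ Wv) ⁅(Θ (⁅X, Z⁆)), (Θ Y)⁆)
      + ((2 : ℝ)/3) • (hassoc (Θ (⁅X, Z⁆)) (Θ Y) (Θ Wv))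
      + ((-1 : ℝ)/6) • (hskew2 (Θ Y) (Θ (⁅X, Z⁆)) (Θ Wv))
      + ((1 : ℝ)/6) • (hskew2 (Θ Wv) (Θ (⁅X, Z⁆)) (Θ Y))
      + (2 : ℝ) • (hlamsymm (Θ Y) (Θ (⁅Wv, ⁅X, Z⁆⁆)))
      + ((2 : ℝ)/3) • (hlamsymm (Θ Y) ⁅(Θ (⁅X, Wv⁆)), (Θ Z)⁆)
      + ((2 : ℝ)/3) • (hassoc (Θ (⁅X, Wv⁆)) (Θ Z) (Θ Y))
      + ((1 : ℝ)/2) • (hskew2 (Θ (⁅X, Wv⁆)) (Θ Y) (Θ Z))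
      + (-2 : ℝ) • (hlamsymm (Θ Z) (Θ (⁅Wv, ⁅X, Y⁆⁆)))
      + ((-2 : ℝ)/3) • (hlamsymm (Θ Z) ⁅(Θ (⁅X, Wv⁆)), (Θ Y)⁆)
      + ((-2 : ℝ)/3) • (hassoc (Θ (⁅X, Wv⁆)) (Θ Y) (Θ Z))
      + ((1 : ℝ)/6) • (hskew2 (Θ Y) (Θ (⁅X, Wv⁆)) (Θ Z))
      + ((-1 : ℝ)/6) • (hskew2 (Θ Z) (Θ (⁅X, Wv⁆)) (Θ Y))
      + ((1 : ℝ)/2) • (hskew2 (Θ (⁅Y, Z⁆)) (Θ Wv) (Θ X))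
      + (-2 : ℝ) • (hlamsymm (Θ X) (Θ (⁅Y, ⁅Z, Wv⁆⁆)))
      + (2 : ℝ) • (hlamsymm (Θ X) (Θ (⁅Z, ⁅Y, Wv⁆⁆)))
      + ((2 : ℝ)/3) • (hlamsymm (Θ X) ⁅(Θ (⁅Y, Z⁆)), (Θ Wv)⁆)
      + ((2 : ℝ)/3) • (hassoc (Θ (⁅Y, Z⁆)) (Θ Wv) (Θ X))
      + ((-2 : ℝ)/3) • (hlamsymm (Θ Wv) ⁅(Θ (⁅Y, Z⁆)), (Θ X)⁆)
      + ((-2 : ℝ)/3) • (hassoc (Θ (⁅Y, Z⁆)) (Θ X) (Θ Wv))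
      + ((1 : ℝ)/6) • (hskew2 (Θ X) (Θ (⁅Y, Z⁆)) (Θ Wv))
      + ((-1 : ℝ)/6) • (hskew2 (Θ Wv) (Θ (⁅Y, Z⁆)) (Θ X))
      + (-2 : ℝ) • (hlamsymm (Θ X) (Θ (⁅Wv, ⁅Y, Z⁆⁆)))
      + ((-2 : ℝ)/3) • (hlamsymm (Θ X) ⁅(Θ (⁅Y, Wv⁆)), (Θ Z)⁆)
      + ((-2 : ℝ)/3) • (hassoc (Θ (⁅Y, Wv⁆)) (Θ Z) (Θ X))
      + ((-1 : ℝ)/2) • (hskew2 (Θ (⁅Y, Wv⁆)) (Θ X) (Θ Z))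
      + ((2 : ℝ)/3) • (hlamsymm (Θ Z) ⁅(Θ (⁅Y, Wv⁆)), (Θ X)⁆)
      + ((2 : ℝ)/3) • (hassoc (Θ (⁅Y, Wv⁆)) (Θ X) (Θ Z))
      + ((-1 : ℝ)/6) • (hskew2 (Θ X) (Θ (⁅Y, Wv⁆)) (Θ Z))
      + ((1 : ℝ)/6) • (hskew2 (Θ Z) (Θ (⁅Y, Wv⁆)) (Θ X))
      + ((2 : ℝ)/3) • (hlamsymm (Θ X) ⁅(Θ (⁅Z, Wv⁆)), (Θ Y)⁆)
      + ((2 : ℝ)/3) • (hassoc (Θ (⁅Z, Wv⁆)) (Θ Y) (Θ X))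
      + ((1 : ℝ)/2) • (hskew2 (Θ (⁅Z, Wv⁆)) (Θ X) (Θ Y))
      + ((-2 : ℝ)/3) • (hlamsymm (Θ Y) ⁅(Θ (⁅Z, Wv⁆)), (Θ X)⁆)
      + ((-2 : ℝ)/3) • (hassoc (Θ (⁅Z, Wv⁆)) (Θ X) (Θ Y))
      + ((1 : ℝ)/6) • (hskew2 (Θ X) (Θ (⁅Z, Wv⁆)) (Θ Y))
      + ((-1 : ℝ)/6) • (hskew2 (Θ Y) (Θ (⁅Z, Wv⁆)) (Θ X))
      + (-1 : ℝ) • (hlamsymm ⁅(Θ X), (Θ Y)⁆ (acg Z (Θ Wv)))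
      + (1 : ℝ) • (hlamsymm ⁅(Θ X), (Θ Y)⁆ (acg Wv (Θ Z)))
      + (1 : ℝ) • (hlamsymm ⁅(Θ X), (Θ Y)⁆ (Θ (⁅Z, Wv⁆)))
      + (-2 : ℝ) • (hskew2 ⁅(Θ X), (Θ Y)⁆ (Θ Wv) (Θ Z))
      + (2 : ℝ) • (hlamsymm ⁅(Θ X), (Θ Y)⁆ ⁅(Θ Wv), (Θ Z)⁆)
      + (1 : ℝ) • (hlamsymm ⁅(Θ X), (Θ Z)⁆ (acg Y (Θ Wv)))
      + (-1 : ℝ) • (hlamsymm ⁅(Θ X), (Θ Z)⁆ (acg Wv (Θ Y)))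
      + (-1 : ℝ) • (hlamsymm ⁅(Θ X), (Θ Z)⁆ (Θ (⁅Y, Wv⁆)))
      + (2 : ℝ) • (hskew2 ⁅(Θ X), (Θ Z)⁆ (Θ Wv) (Θ Y))
      + (-2 : ℝ) • (hlamsymm ⁅(Θ X), (Θ Z)⁆ ⁅(Θ Wv), (Θ Y)⁆)
      + (-1 : ℝ) • (hlamsymm ⁅(Θ X), (Θ Wv)⁆ (acg Y (Θ Z)))
      + (1 : ℝ) • (hlamsymm ⁅(Θ X), (Θ Wv)⁆ (acg Z (Θ Y)))
      + (1 : ℝ) • (hlamsymm ⁅(Θ X), (Θ Wv)⁆ (Θ (⁅Y, Z⁆)))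
      + (-1 : ℝ) • (hlamsymm ⁅(Θ X), (Θ Wv)⁆ ⁅(Θ Y), (Θ Z)⁆)
      + (-2 : ℝ) • (hskew2 ⁅(Θ Y), (Θ Z)⁆ (Θ Wv) (Θ X))
      + (2 : ℝ) • (hlamsymm ⁅(Θ Y), (Θ Z)⁆ ⁅(Θ Wv), (Θ X)⁆)
      + (-1 : ℝ) • (hlamsymm ⁅(Θ Y), (Θ Z)⁆ (acg X (Θ Wv)))
      + (1 : ℝ) • (hlamsymm ⁅(Θ Y), (Θ Z)⁆ (acg Wv (Θ X)))
      + (1 : ℝ) • (hlamsymm ⁅(Θ Y), (Θ Z)⁆ (Θ (⁅X, Wv⁆)))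
      + (1 : ℝ) • (hlamsymm ⁅(Θ Y), (Θ Wv)⁆ (acg X (Θ Z)))
      + (-1 : ℝ) • (hlamsymm ⁅(Θ Y), (Θ Wv)⁆ (acg Z (Θ X)))
      + (-1 : ℝ) • (hlamsymm ⁅(Θ Y), (Θ Wv)⁆ (Θ (⁅X, Z⁆)))
      + (1 : ℝ) • (hlamsymm ⁅(Θ Y), (Θ Wv)⁆ ⁅(Θ X), (Θ Z)⁆)
      + (-1 : ℝ) • (hlamsymm ⁅(Θ Z), (Θ Wv)⁆ (acg X (Θ Y)))
      + (1 : ℝ) • (hlamsymm ⁅(Θ Z), (Θ Wv)⁆ (acg Y (Θ X)))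
      + (1 : ℝ) • (hlamsymm ⁅(Θ Z), (Θ Wv)⁆ (Θ (⁅X, Y⁆)))
      + (-1 : ℝ) • (hlamsymm ⁅(Θ Z), (Θ Wv)⁆ ⁅(Θ X), (Θ Y)⁆)
      + (-2 : ℝ) • (hjac (Θ Z) X Y Wv)
      + (2 : ℝ) • (hjac (Θ Wv) X Y Z)
      + (2 : ℝ) • (hjac (Θ Y) X Z Wv)
      + (-2 : ℝ) • (hjac (Θ X) Y Z Wv)
      + (2 : ℝ) • (hassoc (Θ Wv) (Θ X) ⁅(Θ Y), (Θ Z)⁆)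
      + (-2 : ℝ) • (hassoc (Θ Wv) (Θ Y) ⁅(Θ X), (Θ Z)⁆)
      + (2 : ℝ) • (hassoc (Θ Wv) (Θ Z) ⁅(Θ X), (Θ Y)⁆)
      + (2 : ℝ) • (hquad (Θ Wv) (Θ X) (Θ Y) (Θ Z))
  · -- second part : `ι_{A^P} CS = λ*(A, dΘ)`
    intro a X Y
    simp only [hCS, hΘfund, hOmfund, hlz2, hOm, hlamadd2, hls2]
    linear_combination (norm := module)
      ((2:ℝ)⁻¹ • hskew2 (const a) (Θ X) (Θ Y)
        - (6:ℝ)⁻¹ • hskew2 (Θ X) (const a) (Θ Y)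
        + (6:ℝ)⁻¹ • hskew2 (Θ Y) (const a) (Θ X)
        + (3:ℝ)⁻¹ • hlaminv (const a) (Θ X) (Θ Y)
        - (3:ℝ)⁻¹ • hlaminv (const a) (Θ Y) (Θ X)
        - (3:ℝ)⁻¹ • hassoc (const a) (Θ X) (Θ Y)
        + (3:ℝ)⁻¹ • hassoc (const a) (Θ Y) (Θ X))
  · -- third part
    intro a X Y
    simp only [hlamder, hconstder, hlz1, hdΘ, hls2, zero_add]
  · intro a
    rw [hΘfund]
end
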